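/- In the Goryachev–Chaplygin case, the function K = ω₃(ω₁² + ω₂²) + ω₁ν₃ is a first integral on the invariant set {G = 0}: if ν, ω solve the Goryachev–Chaplygin equations ν̇ = ν × ω, 4ω̇₁ = 3ω₂ω₃, 4ω̇₂ = −3ω₁ω₃ − ν₃, ω̇₃ = ν₂, and the initial condition satisfies 4(ω₁ν₁ + ω₂ν₂) + ω₃ν₃ = 0, then dK/dt = 0 along the solution. -/

import Mathlib

/-- In the Goryachev–Chaplygin case, `K = ω₃(ω₁² + ω₂²) + ω₁ν₃` is a first
integral on the invariant set `{G = 0}`. -/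
theorem goryachev_chaplygin_integral_conserved
    (ν1 ν2 ν3 ω1 ω2 ω3 ν1' ν2' ν3' ω1' ω2' ω3' : ℝ → ℝ)
    (hν1 : ∀ t, HasDerivAt ν1 (ν1' t) t)
    (hν2 : ∀ t, HasDerivAt ν2 (ν2' t) t)
    (hν3 : ∀ t, HasDerivAt ν3 (ν3' t) t)
    (hω1 : ∀ t, HasDerivAt ω1 (ω1' t) t)
    (hω2 : ∀ t, HasDerivAt ω2 (ω2' t) t)
    (hω3 : ∀ t, HasDerivAt ω3 (ω3' t) t)
    (e1 : ∀ t, ν1' t = ν2 t * ω3 t - ν3 t * ω2 t)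
    (e2 : ∀ t, ν2' t = ν3 t * ω1 t - ν1 t * ω3 t)
    (e3 : ∀ t, ν3' t = ν1 t * ω2 t - ν2 t * ω1 t)
    (e4 : ∀ t, 4 * ω1' t = 3 * ω2 t * ω3 t)
    (e5 : ∀ t, 4 * ω2' t = -(3 * ω1 t * ω3 t) - ν3 t)
    (e6 : ∀ t, ω3' t = ν2 t)
    (hG0 : 4 * (ω1 0 * ν1 0 + ω2 0 * ν2 0) + ω3 0 * ν3 0 = 0) :
    ∀ t, HasDerivAt
      (fun s => ω3 s * ((ω1 s)^2 + (ω2 s)^2) + ω1 s * ν3 s) 0 t := by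
  set G : ℝ → ℝ := fun s => 4 * (ω1 s * ν1 s + ω2 s * ν2 s) + ω3 s * ν3 s with hGdef
  have hG' : ∀ t, HasDerivAt G 0 t := by
    intro t
    have h : HasDerivAt G
        (4 * (ω1' t * ν1 t + ω1 t * ν1' t + (ω2' t * ν2 t + ω2 t * ν2' t))
          + (ω3' t * ν3 t + ω3 t * ν3' t)) t := by
      exact (((((hω1 t).mul (hν1 t)).add ((hω2 t).mul (hν2 t))).const_mul 4).add
        ((hω3 t).mul (hν3 t)))
    convert h using 1
    have h1 := e1 t; have h2 := e2 t; have h3 := e3 t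
    have h4 := e4 t; have h5 := e5 t; have h6 := e6 t
    linear_combination -(ν1 t * h4 + 4 * ω1 t * h1 + ν2 t * h5 + 4 * ω2 t * h2
      + ν3 t * h6 + ω3 t * h3)
  have hGconst : ∀ t, G t = 0 := by
    intro t
    have hd : Differentiable ℝ G := fun x => (hG' x).differentiableAt
    have := is_const_of_deriv_eq_zero hd (fun x => (hG' x).deriv) t 0
    rw [this]; exact hG0
  intro t
  have h : HasDerivAt (fun s => ω3 s * ((ω1 s)^2 + (ω2 s)^2) + ω1 s * ν3 s)
      (ω3' t * ((ω1 t)^2 + (ω2 t)^2)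
        + ω3 t * (2 * ω1 t * ω1' t + 2 * ω2 t * ω2' t)
        + (ω1' t * ν3 t + ω1 t * ν3' t)) t := by
    have p1 : HasDerivAt (fun s => (ω1 s)^2) (2 * ω1 t * ω1' t) t := by
      simpa [mul_comm] using (hω1 t).fun_pow 2
    have p2 : HasDerivAt (fun s => (ω2 s)^2) (2 * ω2 t * ω2' t) t := by
      simpa [mul_comm] using (hω2 t).fun_pow 2
    exact ((hω3 t).mul (p1.add p2)).add ((hω1 t).mul (hν3 t))
  convert h using 1
  have h3 := e3 t; have h4 := e4 t; have h5 := e5 t; have h6 := e6 t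
  have hGt := hGconst t
  simp only [hGdef] at hGt
  linear_combination -((ω1 t ^ 2 + ω2 t ^ 2) * h6 + (ω3 t * ω1 t / 2) * h4
    + (ω3 t * ω2 t / 2) * h5 + (ν3 t / 4) * h4 + ω1 t * h3 + (ω2 t / 4) * hGt)
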